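/- Let w : B → ℝ≥0 be nonnegative weights on a finite set B with total weight W, and let P(1),…,P(κ) be partitions of B into groups, with extended groups G⁺ ⊇ G such that each element of B lies in G⁺\G for at most r pairs (i, G∈P(i)). If for each i, ∑_{G∈P(i)} w*(G) ≥ (1+δ)W' with δ > r/κ·(W/W'), where w*(G) is a second nonnegative group weight with ∑_{G∈P(i)} w*(G) ≥ (1+δ)W' for all i and ∑_{G∈P(i)} w(G) ≤ W' for all i, then there exist i and G ∈ P(i) with w*(G) > w(G) + ∑_{b∈G⁺\G} w(b). -/

import Mathlib

/-- Double-counting/averaging lemma: `κ` partitions into groups with extensions, each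
element lying in `G⁺ \ G` for at most `r` pairs `(i, G)`; if every partition has
`∑ w*(G) ≥ (1+δ)W'` and `∑ w(G) ≤ W'` with `δ > rW/(κW')`, then some group satisfies
`w*(G) > w(G⁺)`. -/
theorem stmt16 {B : Type*} [Fintype B] [DecidableEq B]
    (κ r : ℕ) (hκ : 0 < κ)
    (P : Fin κ → Finset (Finset B)) (ext : Finset B → Finset B)
    (hext : ∀ G, G ⊆ ext G)
    (w : B → ℝ) (hw : ∀ b, 0 ≤ w b)
    (wstar : Finset B → ℝ)
    (W' δ : ℝ) (hW' : 0 < W')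
    (hδ : (r : ℝ) * (∑ b, w b) / (κ * W') < δ)
    (hr : ∀ b : B, (∑ i : Fin κ, ((P i).filter fun G => b ∈ ext G ∧ b ∉ G).card) ≤ r)
    (hstar : ∀ i, (1 + δ) * W' ≤ ∑ G ∈ P i, wstar G)
    (hwg : ∀ i, (∑ G ∈ P i, ∑ b ∈ G, w b) ≤ W') :
    ∃ i, ∃ G ∈ P i, (∑ b ∈ ext G, w b) < wstar G := by
  by_contra hcon
  push_neg at hcon
  have hκW' : 0 < (κ : ℝ) * W' := by positivity
  have hδ' : (r : ℝ) * (∑ b, w b) < δ * ((κ : ℝ) * W') := by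
    rwa [div_lt_iff₀ hκW'] at hδ
  have key : ∀ i, ∑ G ∈ P i, wstar G ≤ W' + ∑ G ∈ P i, ∑ b ∈ ext G \ G, w b := by
    intro i
    calc ∑ G ∈ P i, wstar G ≤ ∑ G ∈ P i, ∑ b ∈ ext G, w b :=
          Finset.sum_le_sum fun G hG => hcon i G hG
      _ = ∑ G ∈ P i, (∑ b ∈ G, w b + ∑ b ∈ ext G \ G, w b) := by
          refine Finset.sum_congr rfl fun G _ => ?_
          rw [← Finset.sum_sdiff (hext G)]; ring
      _ = (∑ G ∈ P i, ∑ b ∈ G, w b) + ∑ G ∈ P i, ∑ b ∈ ext G \ G, w b :=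
          Finset.sum_add_distrib
      _ ≤ W' + ∑ G ∈ P i, ∑ b ∈ ext G \ G, w b :=
          add_le_add (hwg i) le_rfl
  have total : (κ : ℝ) * ((1 + δ) * W') ≤
      (κ : ℝ) * W' + ∑ i : Fin κ, ∑ G ∈ P i, ∑ b ∈ ext G \ G, w b := by
    calc (κ : ℝ) * ((1 + δ) * W') = ∑ _i : Fin κ, ((1 + δ) * W') := by
          simp [Finset.sum_const, mul_comm]
      _ ≤ ∑ i : Fin κ, ∑ G ∈ P i, wstar G := Finset.sum_le_sum fun i _ => hstar i
      _ ≤ ∑ i : Fin κ, (W' + ∑ G ∈ P i, ∑ b ∈ ext G \ G, w b) :=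
          Finset.sum_le_sum fun i _ => key i
      _ = (κ : ℝ) * W' + ∑ i : Fin κ, ∑ G ∈ P i, ∑ b ∈ ext G \ G, w b := by
          rw [Finset.sum_add_distrib]; simp [Finset.sum_const, mul_comm]
  have swap : ∑ i : Fin κ, ∑ G ∈ P i, ∑ b ∈ ext G \ G, w b ≤ (r : ℝ) * ∑ b, w b := by
    have e1 : ∀ G : Finset B, ∑ b ∈ ext G \ G, w b
        = ∑ b : B, if b ∈ ext G ∧ b ∉ G then w b else 0 := by
      intro G
      rw [← Finset.sum_filter]
      apply Finset.sum_congr _ (fun _ _ => rfl)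
      ext b; simp [Finset.mem_sdiff]
    calc ∑ i : Fin κ, ∑ G ∈ P i, ∑ b ∈ ext G \ G, w b
        = ∑ b : B, ∑ i : Fin κ, ∑ G ∈ P i, (if b ∈ ext G ∧ b ∉ G then w b else 0) := by
          simp only [e1]
          rw [show (∑ i : Fin κ, ∑ G ∈ P i, ∑ b : B, if b ∈ ext G ∧ b ∉ G then w b else 0)
              = ∑ i : Fin κ, ∑ b : B, ∑ G ∈ P i, if b ∈ ext G ∧ b ∉ G then w b else 0
            from Finset.sum_congr rfl fun i _ => Finset.sum_comm, Finset.sum_comm]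
      _ = ∑ b : B, ((∑ i : Fin κ, ((P i).filter fun G => b ∈ ext G ∧ b ∉ G).card : ℕ) : ℝ) * w b := by
          refine Finset.sum_congr rfl fun b _ => ?_
          push_cast
          rw [Finset.sum_mul]
          refine Finset.sum_congr rfl fun i _ => ?_
          rw [← Finset.sum_filter, Finset.sum_const, nsmul_eq_mul]
      _ ≤ ∑ b : B, (r : ℝ) * w b := by
          refine Finset.sum_le_sum fun b _ => ?_
          exact mul_le_mul_of_nonneg_right (by exact_mod_cast hr b) (hw b)
      _ = (r : ℝ) * ∑ b, w b := by rw [Finset.mul_sum]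
  nlinarith [total, swap, hδ']
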